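/- For the generalized Hermite polynomials H_{m,n} (Wronskians of consecutive Hermite polynomials), the rational function w(z) = d/dz ln(H_{2,1}(z)/H_{1,1}(z)) = H_2'(z)/H_2(z) − H_1'(z)/H_1(z) solves the fourth Painlevé equation with α = 2·1 + 1 + 1 = 4 and β = −2·1² = −2, at all z where H_1(z) ≠ 0 and H_2(z) ≠ 0 and w(z) ≠ 0. -/

import Mathlib

/-- The physicists' Hermite polynomials, as real functions, via the recurrence
`H₀ = 1`, `H₁(x) = 2x`, `H_{n+2}(x) = 2x H_{n+1}(x) - 2(n+1) H_n(x)`. -/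
noncomputable def hermiteH : ℕ → ℝ → ℝ
  | 0, _ => 1
  | 1, x => 2 * x
  | (n + 2), x => 2 * x * hermiteH (n + 1) x - 2 * (n + 1) * hermiteH n x

lemma hH1 : hermiteH 1 = fun x : ℝ => 2 * x := rfl

lemma hH2 : hermiteH 2 = fun x : ℝ => 4 * x ^ 2 - 2 := by
  funext x
  show 2 * x * hermiteH 1 x - 2 * ((0 : ℕ) + 1) * hermiteH 0 x = _
  simp [hermiteH]; ring

lemma dH1 : deriv (hermiteH 1) = fun _ : ℝ => (2 : ℝ) := by
  funext y; rw [hH1]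
  exact ((hasDerivAt_id y).const_mul (2:ℝ)).deriv.trans (by ring)

lemma dH2 : deriv (hermiteH 2) = fun y : ℝ => 8 * y := by
  funext y; rw [hH2]
  have h : HasDerivAt (fun x : ℝ => 4 * x ^ 2 - 2) (8 * y) y := by
    have := ((hasDerivAt_pow 2 y).const_mul (4 : ℝ)).sub_const 2
    refine this.congr_deriv ?_; ring
  exact h.deriv


set_option maxHeartbeats 2000000 in
/-- The rational solution `w = H₂'/H₂ - H₁'/H₁ = d/dz ln(H_{2,1}/H_{1,1})` of the
fourth Painlevé equation with `α = 4`, `β = -2` (the case `m = n = 1` of the family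
`w^{[1]}_{m,n} = d/dz ln(H_{m+1,n}/H_{m,n})`). -/
theorem piv_genHermite_sol_1 :
    ∀ z : ℝ, hermiteH 1 z ≠ 0 → hermiteH 2 z ≠ 0 →
      let w : ℝ → ℝ := fun y =>
        deriv (hermiteH 2) y / hermiteH 2 y - deriv (hermiteH 1) y / hermiteH 1 y
      w z ≠ 0 →
        deriv (deriv w) z =
          (deriv w z) ^ 2 / (2 * w z) + (3 / 2) * (w z) ^ 3 + 4 * z * (w z) ^ 2
            + 2 * (z ^ 2 - 4) * w z + (-2) / (w z) := by
  intro z hz1 hz2 w hw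
  rw [hH1] at hz1
  rw [hH2] at hz2
  simp only at hz1 hz2
  have hz0 : z ≠ 0 := fun h => hz1 (by rw [h]; ring)
  have hwg : w = fun y : ℝ => 8 * y / (4 * y ^ 2 - 2) - 2 / (2 * y) := by
    funext y
    show deriv (hermiteH 2) y / hermiteH 2 y - deriv (hermiteH 1) y / hermiteH 1 y = _
    rw [dH1, dH2, hH1, hH2]
  -- derivative of w on the good set
  have hder : ∀ y : ℝ, y ≠ 0 → 4 * y ^ 2 - 2 ≠ 0 →
      HasDerivAt w ((-32 * y ^ 2 - 16) / (4 * y ^ 2 - 2) ^ 2 + 1 / y ^ 2) y := by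
    intro y hy0 hyd
    rw [hwg]
    have hy2 : (2 : ℝ) * y ≠ 0 := by simpa using hy0
    have h1 : HasDerivAt (fun x : ℝ => 8 * x) 8 y := by
      simpa using (hasDerivAt_id y).const_mul (8 : ℝ)
    have h2 : HasDerivAt (fun x : ℝ => 4 * x ^ 2 - 2) (8 * y) y := by
      have := ((hasDerivAt_pow 2 y).const_mul (4 : ℝ)).sub_const 2
      refine this.congr_deriv ?_; ring
    have h3 : HasDerivAt (fun x : ℝ => 2 * x) 2 y := by
      simpa using (hasDerivAt_id y).const_mul (2 : ℝ)
    have h4 : HasDerivAt (fun x : ℝ => (2 : ℝ)) 0 y := hasDerivAt_const y 2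
    have := (h1.div h2 hyd).sub (h4.div h3 hy2)
    refine this.congr_deriv ?_
    field_simp
    ring
  have hS : IsOpen {y : ℝ | y ≠ 0 ∧ 4 * y ^ 2 - 2 ≠ 0} := by
    have h1 : IsOpen {y : ℝ | y ≠ 0} := isOpen_ne
    have h2 : IsOpen {y : ℝ | 4 * y ^ 2 - 2 ≠ 0} := by
      have : Continuous fun y : ℝ => 4 * y ^ 2 - 2 := by continuity
      exact isOpen_compl_singleton.preimage this
    exact h1.inter h2
  have hmem : {y : ℝ | y ≠ 0 ∧ 4 * y ^ 2 - 2 ≠ 0} ∈ nhds z := hS.mem_nhds ⟨hz0, hz2⟩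
  have hEq : deriv w =ᶠ[nhds z]
      fun y => (-32 * y ^ 2 - 16) / (4 * y ^ 2 - 2) ^ 2 + 1 / y ^ 2 :=
    Filter.eventually_of_mem hmem (fun y hy => (hder y hy.1 hy.2).deriv)
  have hdd : deriv (deriv w) z =
      deriv (fun y => (-32 * y ^ 2 - 16) / (4 * y ^ 2 - 2) ^ 2 + 1 / y ^ 2) z :=
    hEq.deriv_eq
  -- second derivative
  have h2z : HasDerivAt (fun x : ℝ => 4 * x ^ 2 - 2) (8 * z) z := by
    have := ((hasDerivAt_pow 2 z).const_mul (4 : ℝ)).sub_const 2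
    refine this.congr_deriv ?_; ring
  have hn : HasDerivAt (fun x : ℝ => -32 * x ^ 2 - 16) (-64 * z) z := by
    have := ((hasDerivAt_pow 2 z).const_mul (-32 : ℝ)).sub_const 16
    refine this.congr_deriv ?_; ring
  have hd2 : HasDerivAt (fun x : ℝ => (4 * x ^ 2 - 2) ^ 2)
      (2 * (4 * z ^ 2 - 2) ^ 1 * (8 * z)) z := h2z.pow 2
  have hp2 : HasDerivAt (fun x : ℝ => x ^ 2) (2 * z ^ 1) z := hasDerivAt_pow 2 z
  have hone : HasDerivAt (fun x : ℝ => (1 : ℝ)) 0 z := hasDerivAt_const z 1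
  have hd2ne : ((4 * z ^ 2 - 2) ^ 2 : ℝ) ≠ 0 := pow_ne_zero 2 hz2
  have hz2ne : (z ^ 2 : ℝ) ≠ 0 := pow_ne_zero 2 hz0
  have hW2 := (hn.div hd2 hd2ne).add (hone.div hp2 hz2ne)
  rw [hdd, HasDerivAt.deriv (f := fun y : ℝ => (-32 * y ^ 2 - 16) / (4 * y ^ 2 - 2) ^ 2 + 1 / y ^ 2) hW2, (hder z hz0 hz2).deriv]
  have hnum : (8 * z ^ 2 + 4 : ℝ) ≠ 0 := by positivity
  have hz2' : z ^ 2 * 4 - 2 ≠ 0 := by rwa [mul_comm]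
  have hwz : w z = (8 * z ^ 2 + 4) / ((4 * z ^ 2 - 2) * (2 * z)) := by
    rw [hwg]; field_simp; ring
  rw [hwz]
  field_simp
  ring
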